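/- Let f: (0,∞) → ℝ, f(k) = (ω_p² + w k² + ħ²k⁴/(4m²))^{1/2} with ω_p, w, ħ, m > 0 and v > 0 large. The set {k > 0 : f(k) < kv} is an interval (k₁, k₂) with endpoints satisfying k₁ = ω_p/v·(1 + o(1)) and k₂ = 2mv/ħ·(1 + o(1)) as v → ∞. -/

import Mathlib

open Filter

private lemma disp_ineq_iff (ωp w hbar m b X S : ℝ) (hωp : 0 < ωp) (hhbar : 0 < hbar)
    (hm : 0 < m) (hb : hbar * ωp / m < b) (hX : 0 ≤ X) (hS0 : 0 ≤ S)
    (hS2 : S ^ 2 = b ^ 2 - hbar ^ 2 * ωp ^ 2 / m ^ 2) :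
    ωp ^ 2 + w * X + hbar ^ 2 * X ^ 2 / (4 * m ^ 2) < X * (b + w) ↔
      2 * ωp ^ 2 / (b + S) < X ∧ X < 2 * m ^ 2 * (b + S) / hbar ^ 2 := by
  have hq : 0 < hbar * ωp / m := by positivity
  have hbpos : 0 < b := hq.trans hb
  have hA : 0 < b + S := by linarith
  have hh2 : (0:ℝ) < hbar ^ 2 := by positivity
  have hmb : hbar * ωp < m * b := by rw [div_lt_iff₀ hm] at hb; linarith
  have hmA : hbar * ωp < m * (b + S) := by nlinarith
  have hmA2 : hbar ^ 2 * ωp ^ 2 < m ^ 2 * (b + S) ^ 2 := by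
    nlinarith [hmA, mul_pos hhbar hωp]
  have hS2' : m ^ 2 * S ^ 2 = m ^ 2 * b ^ 2 - hbar ^ 2 * ωp ^ 2 := by
    field_simp at hS2; linarith [hS2]
  have hid : m ^ 2 * (b + S) ^ 2 + ωp ^ 2 * hbar ^ 2 = 2 * m ^ 2 * b * (b + S) := by
    nlinarith [hS2']
  have h4 : (0:ℝ) < 4 * m ^ 2 := by positivity
  have hP : (ωp ^ 2 + w * X + hbar ^ 2 * X ^ 2 / (4 * m ^ 2) < X * (b + w)) ↔
      hbar ^ 2 * X ^ 2 - 4 * m ^ 2 * b * X + 4 * m ^ 2 * ωp ^ 2 < 0 := by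
    rw [show ωp ^ 2 + w * X + hbar ^ 2 * X ^ 2 / (4 * m ^ 2)
        = (4 * m ^ 2 * ωp ^ 2 + 4 * m ^ 2 * w * X + hbar ^ 2 * X ^ 2) / (4 * m ^ 2) by
      field_simp]
    rw [div_lt_iff₀ h4]
    constructor <;> intro h <;> nlinarith [h]
  rw [hP, div_lt_iff₀ hA, lt_div_iff₀ hh2]
  have hfact : (b + S) * (hbar ^ 2 * X ^ 2 - 4 * m ^ 2 * b * X + 4 * m ^ 2 * ωp ^ 2)
      = ((b + S) * X - 2 * ωp ^ 2) * (hbar ^ 2 * X - 2 * m ^ 2 * (b + S)) := by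
    linear_combination 2 * X * hid
  constructor
  · intro h
    have hut : ((b + S) * X - 2 * ωp ^ 2) * (hbar ^ 2 * X - 2 * m ^ 2 * (b + S)) < 0 := by
      rw [← hfact]; exact mul_neg_of_pos_of_neg hA h
    constructor
    · by_contra hcon
      push_neg at hcon
      have hu : (b + S) * X - 2 * ωp ^ 2 ≤ 0 := by linarith
      have ht : 0 < hbar ^ 2 * X - 2 * m ^ 2 * (b + S) := by
        by_contra ht'
        push_neg at ht'
        exact absurd hut (not_lt.2 (mul_nonneg_of_nonpos_of_nonpos hu ht'))
      linarith [mul_lt_mul_of_pos_left ht hA, mul_le_mul_of_nonneg_left hu hh2.le, hmA2]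
    · by_contra hcon
      push_neg at hcon
      have ht : 0 ≤ hbar ^ 2 * X - 2 * m ^ 2 * (b + S) := by linarith
      have hu : (b + S) * X - 2 * ωp ^ 2 < 0 := by
        by_contra hu'
        push_neg at hu'
        exact absurd hut (not_lt.2 (mul_nonneg hu' ht))
      linarith [mul_le_mul_of_nonneg_left ht hA.le, mul_lt_mul_of_pos_left hu hh2, hmA2]
  · rintro ⟨h1, h2⟩
    have hlt : ((b + S) * X - 2 * ωp ^ 2) * (hbar ^ 2 * X - 2 * m ^ 2 * (b + S)) < 0 :=
      mul_neg_of_pos_of_neg (by linarith) (by linarith)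
    by_contra h'
    push_neg at h'
    have := mul_nonneg hA.le h'
    rw [hfact] at this
    linarith


set_option maxHeartbeats 1600000 in
/-- For the interpolated Langmuir dispersion law
f(k) = (ω_p² + w k² + ħ²k⁴/(4m²))^{1/2}, for large v the set
{k > 0 : f(k) < kv} is an open interval (k₁(v), k₂(v)) whose endpoints satisfy
k₁(v) ~ ω_p/v and k₂(v) ~ 2mv/ħ as v → ∞. -/
theorem dispersion_cutoffs
    (ωp w hbar m : ℝ) (hωp : 0 < ωp) (hw : 0 < w) (hhbar : 0 < hbar) (hm : 0 < m)
    (f : ℝ → ℝ)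
    (hf : f = fun k => Real.sqrt (ωp ^ 2 + w * k ^ 2 + hbar ^ 2 * k ^ 4 / (4 * m ^ 2))) :
    ∃ V : ℝ, 0 < V ∧ ∃ k1 k2 : ℝ → ℝ,
      (∀ v, V < v → ({k : ℝ | 0 < k ∧ f k < k * v} = Set.Ioo (k1 v) (k2 v)
        ∧ 0 < k1 v ∧ k1 v < k2 v)) ∧
      Tendsto (fun v => k1 v / (ωp / v)) atTop (nhds 1) ∧
      Tendsto (fun v => k2 v / (2 * m * v / hbar)) atTop (nhds 1) := by
  have hq : 0 < hbar * ωp / m := by positivity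
  have hq2 : (hbar * ωp / m) ^ 2 = hbar ^ 2 * ωp ^ 2 / m ^ 2 := by
    rw [div_pow, mul_pow]
  set C2 : ℝ := hbar ^ 2 * ωp ^ 2 / m ^ 2 with hC2def
  have hC2 : 0 < C2 := by positivity
  set S : ℝ → ℝ := fun v => Real.sqrt ((v ^ 2 - w) ^ 2 - C2) with hSdef
  set V : ℝ := w + hbar * ωp / m + 1 with hVdef
  -- basic facts for v > V
  have hfacts : ∀ v : ℝ, V < v → 1 < v ∧ hbar * ωp / m < v ^ 2 - w ∧
      0 ≤ (v ^ 2 - w) ^ 2 - C2 := by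
    intro v hv
    have hv1 : 1 < v := by rw [hVdef] at hv; linarith
    have hvv : v < v ^ 2 := by nlinarith
    have hb : hbar * ωp / m < v ^ 2 - w := by rw [hVdef] at hv; linarith
    have hD : 0 ≤ (v ^ 2 - w) ^ 2 - C2 := by
      rw [← hq2]; nlinarith [hb, hq]
    exact ⟨hv1, hb, hD⟩
  -- limit machinery
  have hv2top : Tendsto (fun v : ℝ => v ^ 2) atTop atTop := tendsto_pow_atTop two_ne_zero
  have hinv : Tendsto (fun v : ℝ => (v ^ 2)⁻¹) atTop (nhds 0) := hv2top.inv_tendsto_atTop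
  have hbtop : Tendsto (fun v : ℝ => v ^ 2 - w) atTop atTop := by
    simpa [sub_eq_add_neg] using tendsto_atTop_add_const_right atTop (-w) hv2top
  have hinv2 : Tendsto (fun v : ℝ => ((v ^ 2 - w) * v ^ 2)⁻¹) atTop (nhds 0) :=
    (hbtop.atTop_mul_atTop₀ hv2top).inv_tendsto_atTop
  have hup : Tendsto (fun v : ℝ => 2 - 2 * w * (v ^ 2)⁻¹) atTop (nhds 2) := by
    have h := hinv.const_mul (2 * w)
    simpa using tendsto_const_nhds.sub h
  have hlo : Tendsto (fun v : ℝ => 2 - 2 * w * (v ^ 2)⁻¹ - C2 * ((v ^ 2 - w) * v ^ 2)⁻¹)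
      atTop (nhds 2) := by
    have h := hinv2.const_mul C2
    simpa using hup.sub h
  have hT : Tendsto (fun v : ℝ => (v ^ 2 - w + S v) / v ^ 2) atTop (nhds 2) := by
    apply tendsto_of_tendsto_of_tendsto_of_le_of_le' hlo hup
    · filter_upwards [eventually_gt_atTop V] with v hv
      obtain ⟨hv1, hb, hD⟩ := hfacts v hv
      have hv0 : 0 < v := lt_trans one_pos hv1
      have hv2pos : 0 < v ^ 2 := by positivity
      have hbpos : 0 < v ^ 2 - w := hq.trans hb
      have hb2 : C2 < (v ^ 2 - w) ^ 2 := by rw [← hq2]; nlinarith [hb, hq]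
      have hS0 : 0 ≤ S v := Real.sqrt_nonneg _
      have hSlb : v ^ 2 - w - C2 / (v ^ 2 - w) ≤ S v := by
        rcases le_or_gt (v ^ 2 - w - C2 / (v ^ 2 - w)) 0 with h | h
        · exact h.trans hS0
        · simp only [hSdef]
          rw [Real.le_sqrt h.le hD]
          have hstep : (C2 / (v ^ 2 - w)) ^ 2 ≤ C2 := by
            rw [div_pow, div_le_iff₀ (by positivity : (0:ℝ) < (v ^ 2 - w) ^ 2)]
            nlinarith [hb2, hC2]
          have h3 : (v ^ 2 - w) * (C2 / (v ^ 2 - w)) = C2 := by field_simp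
          nlinarith [hstep, h3]
      have heq : 2 - 2 * w * (v ^ 2)⁻¹ - C2 * ((v ^ 2 - w) * v ^ 2)⁻¹
          = (2 * (v ^ 2 - w) - C2 / (v ^ 2 - w)) / v ^ 2 := by
        field_simp
      rw [heq, div_le_div_iff_of_pos_right hv2pos]
      linarith [hSlb]
    · filter_upwards [eventually_gt_atTop V] with v hv
      obtain ⟨hv1, hb, hD⟩ := hfacts v hv
      have hv0 : 0 < v := lt_trans one_pos hv1
      have hv2pos : 0 < v ^ 2 := by positivity
      have hbpos : 0 < v ^ 2 - w := hq.trans hb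
      have hSub : S v ≤ v ^ 2 - w := by
        simp only [hSdef]
        calc Real.sqrt ((v ^ 2 - w) ^ 2 - C2) ≤ Real.sqrt ((v ^ 2 - w) ^ 2) :=
              Real.sqrt_le_sqrt (by linarith [hC2])
          _ = v ^ 2 - w := Real.sqrt_sq hbpos.le
      have heq : 2 - 2 * w * (v ^ 2)⁻¹ = 2 * (v ^ 2 - w) / v ^ 2 := by
        field_simp
      rw [heq, div_le_div_iff_of_pos_right hv2pos]
      linarith [hSub]
  refine ⟨V, by positivity,
    (fun v => Real.sqrt (2 * ωp ^ 2 / (v ^ 2 - w + S v))),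
    (fun v => Real.sqrt (2 * m ^ 2 * (v ^ 2 - w + S v) / hbar ^ 2)), ?_, ?_, ?_⟩
  · -- set equality and ordering
    intro v hv
    obtain ⟨hv1, hb, hD⟩ := hfacts v hv
    have hv0 : 0 < v := by linarith
    have hS0 : 0 ≤ S v := Real.sqrt_nonneg _
    have hS2 : (S v) ^ 2 = (v ^ 2 - w) ^ 2 - C2 := Real.sq_sqrt hD
    have hbpos : 0 < v ^ 2 - w := hq.trans hb
    have hA : 0 < v ^ 2 - w + S v := by linarith
    have hiff := fun (k : ℝ) => disp_ineq_iff ωp w hbar m (v ^ 2 - w) (k ^ 2) (S v)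
      hωp hhbar hm hb (sq_nonneg k) hS0 (by rw [hS2, hC2def])
    have hk1pos : 0 < Real.sqrt (2 * ωp ^ 2 / (v ^ 2 - w + S v)) :=
      Real.sqrt_pos.2 (by positivity)
    refine ⟨?_, hk1pos, ?_⟩
    · ext k
      simp only [Set.mem_setOf_eq, Set.mem_Ioo, hf]
      constructor
      · rintro ⟨hk, hlt⟩
        have hkv : 0 < k * v := mul_pos hk hv0
        rw [Real.sqrt_lt' hkv] at hlt
        have hlt' : ωp ^ 2 + w * k ^ 2 + hbar ^ 2 * (k ^ 2) ^ 2 / (4 * m ^ 2)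
            < k ^ 2 * ((v ^ 2 - w) + w) := by
          have e1 : hbar ^ 2 * (k ^ 2) ^ 2 / (4 * m ^ 2)
              = hbar ^ 2 * k ^ 4 / (4 * m ^ 2) := by ring_nf
          have e2 : k ^ 2 * ((v ^ 2 - w) + w) = (k * v) ^ 2 := by ring
          rw [e1, e2]; exact hlt
        obtain ⟨hx1, hx2⟩ := (hiff k).1 hlt'
        exact ⟨(Real.sqrt_lt' hk).2 hx1, (Real.lt_sqrt hk.le).2 hx2⟩
      · rintro ⟨h1, h2⟩
        have hk : 0 < k := hk1pos.trans h1
        have hkv : 0 < k * v := mul_pos hk hv0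
        have hx1 := (Real.sqrt_lt' hk).1 h1
        have hx2 := (Real.lt_sqrt hk.le).1 h2
        have hlt' := (hiff k).2 ⟨hx1, hx2⟩
        refine ⟨hk, ?_⟩
        rw [Real.sqrt_lt' hkv, show (k * v) ^ 2 = k ^ 2 * (v ^ 2 - w + w) from by ring]
        rw [show (k ^ 2) ^ 2 = k ^ 4 from by ring] at hlt'
        exact hlt'
    · -- k1 < k2
      apply Real.sqrt_lt_sqrt (by positivity)
      rw [div_lt_div_iff₀ hA (by positivity : (0:ℝ) < hbar ^ 2)]
      have hmb : hbar * ωp < m * (v ^ 2 - w) := by rw [div_lt_iff₀ hm] at hb; linarith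
      have hmA : hbar * ωp < m * (v ^ 2 - w + S v) := by nlinarith
      nlinarith [hmA, mul_pos hhbar hωp]
  · -- k1 asymptotics
    have hr : Tendsto (fun v : ℝ => 2 * v ^ 2 / (v ^ 2 - w + S v)) atTop (nhds 1) := by
      have h := (tendsto_const_nhds (x := (2:ℝ)) (f := atTop)).div hT two_ne_zero
      rw [show (2:ℝ) / 2 = 1 by norm_num] at h
      refine h.congr fun v => ?_
      simp only [Pi.div_apply]
      rw [div_div_eq_mul_div]
    have hs : Tendsto (fun v : ℝ => Real.sqrt (2 * v ^ 2 / (v ^ 2 - w + S v)))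
        atTop (nhds 1) := by
      have h := (Real.continuous_sqrt.tendsto 1).comp hr
      rw [Real.sqrt_one] at h
      exact h
    apply hs.congr'
    filter_upwards [eventually_gt_atTop V] with v hv
    obtain ⟨hv1, hb, hD⟩ := hfacts v hv
    have hv0 : 0 < v := lt_trans one_pos hv1
    have hbpos : 0 < v ^ 2 - w := hq.trans hb
    have hS0 : 0 ≤ S v := Real.sqrt_nonneg _
    have hA : 0 < v ^ 2 - w + S v := by linarith
    rw [show 2 * v ^ 2 / (v ^ 2 - w + S v)
        = 2 * ωp ^ 2 / (v ^ 2 - w + S v) * (v / ωp) ^ 2 by field_simp,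
      Real.sqrt_mul (by positivity) _, Real.sqrt_sq (by positivity),
      div_div_eq_mul_div, ← mul_div_assoc]
  · -- k2 asymptotics
    have hT2 : Tendsto (fun v : ℝ => (v ^ 2 - w + S v) / (2 * v ^ 2)) atTop (nhds 1) := by
      have h := hT.div_const 2
      rw [show (2:ℝ) / 2 = 1 by norm_num] at h
      refine h.congr fun v => ?_
      rw [div_div, mul_comm]
    have hs : Tendsto (fun v : ℝ => Real.sqrt ((v ^ 2 - w + S v) / (2 * v ^ 2)))
        atTop (nhds 1) := by
      have h := (Real.continuous_sqrt.tendsto 1).comp hT2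
      rw [Real.sqrt_one] at h
      exact h
    apply hs.congr'
    filter_upwards [eventually_gt_atTop V] with v hv
    obtain ⟨hv1, hb, hD⟩ := hfacts v hv
    have hv0 : 0 < v := lt_trans one_pos hv1
    have hbpos : 0 < v ^ 2 - w := hq.trans hb
    have hS0 : 0 ≤ S v := Real.sqrt_nonneg _
    have hA : 0 < v ^ 2 - w + S v := by linarith
    rw [show (v ^ 2 - w + S v) / (2 * v ^ 2)
        = 2 * m ^ 2 * (v ^ 2 - w + S v) / hbar ^ 2 * (hbar / (2 * m * v)) ^ 2 by
        field_simp,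
      Real.sqrt_mul (by positivity) _, Real.sqrt_sq (by positivity),
      div_div_eq_mul_div, ← mul_div_assoc]
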